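/- For the cycle C_n on n ≥ 3 vertices, b_R(C_n) = 3 if n ≡ 2 (mod 3), and b_R(C_n) = 2 otherwise. -/

import Mathlib

open SimpleGraph Finset

/-- A Roman dominating function: values in {0,1,2}, every 0-vertex has a neighbor with value 2. -/
def IsRDF {V : Type*} (G : SimpleGraph V) (f : V → ℕ) : Prop :=
  (∀ v, f v ≤ 2) ∧ ∀ v, f v = 0 → ∃ u, G.Adj v u ∧ f u = 2

/-- The Roman domination number: minimum weight of a Roman dominating function. -/
noncomputable def romanDom {V : Type*} [Fintype V] (G : SimpleGraph V) : ℕ :=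
  sInf {k | ∃ f : V → ℕ, IsRDF G f ∧ ∑ v, f v = k}

/-- A dominating set. -/
def IsDomSet {V : Type*} (G : SimpleGraph V) (S : Set V) : Prop :=
  ∀ v, v ∈ S ∨ ∃ u ∈ S, G.Adj u v

/-- The domination number. -/
noncomputable def domNum {V : Type*} [Fintype V] (G : SimpleGraph V) : ℕ :=
  sInf {k | ∃ S : Set V, IsDomSet G S ∧ S.ncard = k}

/-- Degree of a vertex. -/
noncomputable def deg {V : Type*} (G : SimpleGraph V) (v : V) : ℕ :=
  (G.neighborSet v).ncard

/-- Maximum degree. -/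
noncomputable def maxDeg {V : Type*} (G : SimpleGraph V) : ℕ :=
  sSup {d | ∃ v, deg G v = d}

/-- Minimum degree. -/
noncomputable def minDeg {V : Type*} (G : SimpleGraph V) : ℕ :=
  sInf {d | ∃ v, deg G v = d}

/-- The Roman bondage number: minimum size of an edge set whose deletion increases `romanDom`. -/
noncomputable def romanBondage {V : Type*} [Fintype V] (G : SimpleGraph V) : ℕ :=
  sInf {k | ∃ B : Set (Sym2 V), B ⊆ G.edgeSet ∧
    romanDom (G.deleteEdges B) > romanDom G ∧ B.ncard = k}

/-- The bondage number: minimum size of an edge set whose deletion increases `domNum`. -/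
noncomputable def bondage {V : Type*} [Fintype V] (G : SimpleGraph V) : ℕ :=
  sInf {k | ∃ B : Set (Sym2 V), B ⊆ G.edgeSet ∧
    domNum (G.deleteEdges B) > domNum G ∧ B.ncard = k}

/-- A vertex cover. -/
def IsVC {V : Type*} (G : SimpleGraph V) (S : Set V) : Prop :=
  ∀ u v, G.Adj u v → u ∈ S ∨ v ∈ S

/-- The vertex covering number. -/
noncomputable def vcNum {V : Type*} [Fintype V] (G : SimpleGraph V) : ℕ :=
  sInf {k | ∃ S : Set V, IsVC G S ∧ S.ncard = k}

-- tail-fixed path pattern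
def g (m j : ℕ) : ℕ := if j % 3 = 1 then 2 else if m % 3 = 1 ∧ j = m - 1 then 1 else 0

lemma g_le (m j : ℕ) : g m j ≤ 2 := by unfold g; split; · omega
                                       split <;> omega

lemma sum_A (m : ℕ) : ∑ j ∈ Finset.range m, (if j % 3 = 1 then 2 else 0) = 2 * ((m + 1) / 3) := by
  induction m with
  | zero => simp
  | succ m ih =>
    rw [Finset.sum_range_succ, ih]
    split <;> omega

lemma sum_g (m : ℕ) : ∑ j ∈ Finset.range m, g m j = (2 * m + 2) / 3 := by
  have h : ∀ j ∈ Finset.range m, g m j =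
      (if j % 3 = 1 then 2 else 0) + (if m % 3 = 1 ∧ j = m - 1 then 1 else 0) := by
    intro j hj
    simp only [Finset.mem_range] at hj
    unfold g
    by_cases h1 : j % 3 = 1
    · have : ¬ (m % 3 = 1 ∧ j = m - 1) := by rintro ⟨hm, rfl⟩; omega
      simp [h1, this]
    · simp [h1]
  rw [Finset.sum_congr rfl h, Finset.sum_add_distrib, sum_A]
  have : ∑ j ∈ Finset.range m, (if m % 3 = 1 ∧ j = m - 1 then 1 else 0) =
      if m % 3 = 1 then 1 else 0 := by
    by_cases hm : m % 3 = 1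
    · have hm1 : 1 ≤ m := by omega
      simp only [hm, true_and, if_true]
      rw [Finset.sum_ite_eq' (Finset.range m) (m-1) (fun _ => 1)]
      simp [Finset.mem_range]; omega
    · simp [hm]
  rw [this]; split <;> omega

-- zeros of g have a 2-neighbor inside the segment
lemma g_zero (m j : ℕ) (hj : j < m) (h0 : g m j = 0) :
    (j % 3 = 0 ∧ j + 1 < m ∧ g m (j+1) = 2) ∨ (j % 3 = 2 ∧ 2 ≤ j ∧ g m (j-1) = 2) := by
  unfold g at h0 ⊢
  by_cases h1 : j % 3 = 1
  · simp [h1] at h0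
  by_cases h2 : m % 3 = 1 ∧ j = m - 1
  · simp only [h1, if_false, if_pos h2] at h0
    omega
  · push_neg at h2
    by_cases h3 : j % 3 = 0
    · left
      have hlt : j + 1 < m := by
        rcases Nat.lt_or_ge (j+1) m with h|h
        · exact h
        · exfalso; exact h2 (by omega) (by omega)
      have h5 : (j+1) % 3 = 1 := by omega
      exact ⟨h3, hlt, by simp [h5]⟩
    · right
      have h4 : j % 3 = 2 := by omega
      have h5 : (j-1) % 3 = 1 := by omega
      exact ⟨h4, by omega, by simp [h5]⟩

section basics
variable {V : Type*} [Fintype V] {G H : SimpleGraph V}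

lemma isRDF_mono (h : G ≤ H) {f : V → ℕ} (hf : IsRDF G f) : IsRDF H f :=
  ⟨hf.1, fun v hv => by obtain ⟨u, hu, h2⟩ := hf.2 v hv; exact ⟨u, h hu, h2⟩⟩

lemma rdf_set_nonempty (G : SimpleGraph V) :
    {k | ∃ f : V → ℕ, IsRDF G f ∧ ∑ v, f v = k}.Nonempty :=
  ⟨_, fun _ => 2, ⟨fun _ => le_refl 2, fun v hv => by simp at hv⟩, rfl⟩

lemma romanDom_le {f : V → ℕ} (hf : IsRDF G f) : romanDom G ≤ ∑ v, f v :=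
  Nat.sInf_le ⟨f, hf, rfl⟩

lemma romanDom_exists (G : SimpleGraph V) :
    ∃ f : V → ℕ, IsRDF G f ∧ ∑ v, f v = romanDom G :=
  Nat.sInf_mem (rdf_set_nonempty G)

lemma romanDom_le_of_equiv (e : V ≃ V) (he : ∀ u v, G.Adj u v ↔ H.Adj (e u) (e v)) :
    romanDom G ≤ romanDom H := by
  obtain ⟨f, hf, hsum⟩ := romanDom_exists H
  have hrdf : IsRDF G (fun v => f (e v)) := by
    refine ⟨fun v => hf.1 _, fun v hv => ?_⟩
    obtain ⟨u, hu, h2⟩ := hf.2 (e v) hv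
    exact ⟨e.symm u, (he v (e.symm u)).2 (by simpa using hu), by simpa using h2⟩
  calc romanDom G ≤ ∑ v, f (e v) := romanDom_le hrdf
    _ = ∑ v, f v := Fintype.sum_equiv e _ _ (fun _ => rfl)
    _ = romanDom H := hsum

lemma romanDom_eq_of_equiv (e : V ≃ V) (he : ∀ u v, G.Adj u v ↔ H.Adj (e u) (e v)) :
    romanDom G = romanDom H :=
  le_antisymm (romanDom_le_of_equiv e he)
    (romanDom_le_of_equiv e.symm (fun u v => by
      rw [he (e.symm u) (e.symm v)]; simp))

end basics

lemma segment_bound {V : Type*} [Fintype V] (H : SimpleGraph V)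
    (hdeg : ∀ v, (H.neighborSet v).ncard ≤ 2) {f : V → ℕ} (hf : IsRDF H f)
    (S : Finset V) (hcl : ∀ v ∈ S, ∀ u, H.Adj v u → u ∈ S) :
    2 * S.card ≤ 3 * ∑ v ∈ S, f v := by
  classical
  set S0 := S.filter (fun v => f v = 0) with hS0
  set Snz := S.filter (fun v => ¬ f v = 0) with hSnz
  set S1 := S.filter (fun v => f v = 1) with hS1
  set S2 := S.filter (fun v => f v = 2) with hS2
  have e1 : Snz.filter (fun v => f v = 1) = S1 := by
    rw [hSnz, Finset.filter_filter, hS1]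
    apply Finset.filter_congr
    intro v _; constructor
    · rintro ⟨_, h⟩; exact h
    · intro h; exact ⟨by omega, h⟩
  have e2 : Snz.filter (fun v => ¬ f v = 1) = S2 := by
    rw [hSnz, Finset.filter_filter, hS2]
    apply Finset.filter_congr
    intro v _; have := hf.1 v
    constructor
    · rintro ⟨h1, h2⟩; omega
    · intro h; exact ⟨by omega, by omega⟩
  have hcard : S.card = S0.card + S1.card + S2.card := by
    have a1 : S0.card + Snz.card = S.card :=
      Finset.card_filter_add_card_filter_not (s := S) (p := fun v => f v = 0)
    have a2 : (Snz.filter (fun v => f v = 1)).card + (Snz.filter (fun v => ¬ f v = 1)).card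
        = Snz.card :=
      Finset.card_filter_add_card_filter_not (s := Snz) (p := fun v => f v = 1)
    rw [e1, e2] at a2
    omega
  have hsum : ∑ v ∈ S, f v = S1.card + 2 * S2.card := by
    have a1 : ∑ v ∈ S0, f v + ∑ v ∈ Snz, f v = ∑ v ∈ S, f v :=
      Finset.sum_filter_add_sum_filter_not S (fun v => f v = 0) f
    have a2 : ∑ v ∈ Snz.filter (fun v => f v = 1), f v
        + ∑ v ∈ Snz.filter (fun v => ¬ f v = 1), f v = ∑ v ∈ Snz, f v :=
      Finset.sum_filter_add_sum_filter_not Snz (fun v => f v = 1) f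
    rw [e1, e2] at a2
    have z0 : ∑ v ∈ S0, f v = 0 := by
      apply Finset.sum_eq_zero; intro v hv
      exact (Finset.mem_filter.mp hv).2
    have z1 : ∑ v ∈ S1, f v = S1.card := by
      rw [Finset.sum_congr rfl (fun v hv => (Finset.mem_filter.mp hv).2)]
      simp; rfl
    have z2 : ∑ v ∈ S2, f v = 2 * S2.card := by
      rw [Finset.sum_congr rfl (fun v hv => (Finset.mem_filter.mp hv).2)]
      simp [mul_comm]; rfl
    omega
  have hzero : S0.card ≤ 2 * S2.card := by
    have hsub : S0 ⊆ S2.biUnion (fun u => (H.neighborSet u).toFinset) := by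
      intro v hv
      obtain ⟨hvS, hv0⟩ := Finset.mem_filter.mp hv
      obtain ⟨u, hadj, hu2⟩ := hf.2 v hv0
      refine Finset.mem_biUnion.mpr ⟨u, ?_, ?_⟩
      · exact Finset.mem_filter.mpr ⟨hcl v hvS u hadj, hu2⟩
      · rw [Set.mem_toFinset]; exact hadj.symm
    calc S0.card ≤ (S2.biUnion (fun u => (H.neighborSet u).toFinset)).card :=
          Finset.card_le_card hsub
      _ ≤ ∑ u ∈ S2, (H.neighborSet u).toFinset.card := Finset.card_biUnion_le
      _ ≤ ∑ _u ∈ S2, 2 := by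
          apply Finset.sum_le_sum
          intro u _
          rw [← Set.ncard_eq_toFinset_card' (H.neighborSet u)]
          exact hdeg u
      _ = 2 * S2.card := by rw [Finset.sum_const, smul_eq_mul, mul_comm]
  omega

lemma cycle_adj_succ {n : ℕ} (hn : 3 ≤ n) (u v : Fin n) (h : (u.val + 1) % n = v.val) :
    (cycleGraph n).Adj u v := by
  rw [SimpleGraph.cycleGraph_adj']
  right
  rw [Fin.sub_def]
  have hu := u.isLt
  have hv := v.isLt
  rcases Nat.lt_or_ge (u.val + 1) n with hlt | hge
  · rw [Nat.mod_eq_of_lt hlt] at h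
    have e : n - u.val + v.val = n + 1 := by omega
    show (n - u.val + v.val) % n = 1
    rw [e, Nat.add_mod_left]
    exact Nat.mod_eq_of_lt (by omega)
  · have hu' : u.val + 1 = n := by omega
    rw [hu', Nat.mod_self] at h
    have e : n - u.val + v.val = 1 := by omega
    show (n - u.val + v.val) % n = 1
    rw [e]
    exact Nat.mod_eq_of_lt (by omega)

lemma sub_val_one {n : ℕ} (hn : 3 ≤ n) {u v : Fin n} (h : (v - u).val = 1) :
    (u.val + 1) % n = v.val := by
  rw [Fin.sub_def] at h
  simp only [] at h
  have hu := u.isLt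
  have hv := v.isLt
  rcases Nat.lt_or_ge (n - u.val + v.val) n with hlt | hge
  · rw [Nat.mod_eq_of_lt hlt] at h
    have h1 : u.val + 1 = n := by omega
    rw [h1, Nat.mod_self]
    omega
  · rw [Nat.mod_eq_sub_mod hge, Nat.mod_eq_of_lt (by omega)] at h
    rw [Nat.mod_eq_of_lt (by omega)]
    omega

lemma cycle_adj_val {n : ℕ} (hn : 3 ≤ n) {u v : Fin n} (h : (cycleGraph n).Adj u v) :
    (u.val + 1) % n = v.val ∨ (v.val + 1) % n = u.val := by
  rw [SimpleGraph.cycleGraph_adj'] at h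
  rcases h with h | h
  · exact Or.inr (sub_val_one hn h)
  · exact Or.inl (sub_val_one hn h)

def F (n m : ℕ) : ℕ → ℕ := fun j => if j < m then g m j else g (n - m) (j - m)

lemma F_weight (n m : ℕ) (hm : m ≤ n) :
    ∑ j ∈ Finset.range n, F n m j = (2*m+2)/3 + (2*(n-m)+2)/3 := by
  rw [Finset.range_eq_Ico, ← Finset.sum_Ico_consecutive _ (Nat.zero_le m) hm]
  have h1 : ∑ j ∈ Finset.Ico 0 m, F n m j = (2*m+2)/3 := by
    rw [← Finset.range_eq_Ico, ← sum_g m]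
    apply Finset.sum_congr rfl
    intro j hj
    simp only [Finset.mem_range] at hj
    simp [F, hj]
  have h2 : ∑ j ∈ Finset.Ico m n, F n m j = (2*(n-m)+2)/3 := by
    rw [Finset.sum_Ico_eq_sum_range, ← sum_g (n - m)]
    apply Finset.sum_congr rfl
    intro j _
    simp [F, Nat.add_sub_cancel_left]
  rw [h1, h2]

lemma edge_free {n : ℕ} {B : Set (Sym2 (Fin n))} {m : ℕ}
    (hB : ∀ (j : ℕ) (hj : j + 1 < n), (j + 1 < m ∨ m ≤ j) →
      s((⟨j, Nat.lt_of_succ_lt hj⟩ : Fin n), (⟨j+1, hj⟩ : Fin n)) ∉ B)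
    (v u : Fin n) (h : u.val = v.val + 1) (hc : v.val + 1 < m ∨ m ≤ v.val) :
    s(v, u) ∉ B := by
  have h2 : v.val + 1 < n := h ▸ u.isLt
  have h3 := hB v.val h2 hc
  have e1 : (⟨v.val, Nat.lt_of_succ_lt h2⟩ : Fin n) = v := Fin.eta v _
  have e2 : (⟨v.val + 1, h2⟩ : Fin n) = u := by apply Fin.ext; simp [h]
  rwa [e1, e2] at h3

lemma upper_two (n : ℕ) (hn : 3 ≤ n) (m : ℕ) (hm : m < n) (B : Set (Sym2 (Fin n)))
    (hB : ∀ (j : ℕ) (hj : j + 1 < n), (j + 1 < m ∨ m ≤ j) →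
      s((⟨j, Nat.lt_of_succ_lt hj⟩ : Fin n), (⟨j+1, hj⟩ : Fin n)) ∉ B) :
    romanDom ((cycleGraph n).deleteEdges B) ≤ (2*m+2)/3 + (2*(n-m)+2)/3 := by
  have hnz : NeZero n := ⟨by omega⟩
  set f : Fin n → ℕ := fun v => F n m v.val with hf
  have hrdf : IsRDF ((cycleGraph n).deleteEdges B) f := by
    refine ⟨fun v => by show F n m v.val ≤ 2; unfold F; split <;> exact g_le _ _,
      fun v hv => ?_⟩
    by_cases hvm : v.val < m
    · have hv0 : g m v.val = 0 := by simpa [hf, F, hvm] using hv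
      rcases g_zero m v.val hvm hv0 with ⟨h3, hlt, h2⟩ | ⟨h3, h2le, h2⟩
      · refine ⟨⟨v.val + 1, by omega⟩, ?_, ?_⟩
        · rw [SimpleGraph.deleteEdges_adj]
          refine ⟨cycle_adj_succ hn _ _ ?_, edge_free hB v _ rfl (Or.inl (by omega))⟩
          exact Nat.mod_eq_of_lt (by omega)
        · show F n m (v.val + 1) = 2
          rw [F, if_pos (by omega : v.val + 1 < m)]
          exact h2
      · refine ⟨⟨v.val - 1, by omega⟩, ?_, ?_⟩
        · rw [SimpleGraph.deleteEdges_adj]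
          constructor
          · refine (cycle_adj_succ hn _ _ ?_).symm
            simp only []
            rw [Nat.sub_add_cancel (by omega)]
            exact Nat.mod_eq_of_lt v.isLt
          · rw [Sym2.eq_swap]
            exact edge_free hB ⟨v.val - 1, by omega⟩ v (by simp; omega) (Or.inl (by simp; omega))
        · show F n m (v.val - 1) = 2
          rw [F, if_pos (by omega : v.val - 1 < m)]
          exact h2
    · have hvm' : m ≤ v.val := by omega
      have hv0 : g (n - m) (v.val - m) = 0 := by simpa [hf, F, hvm] using hv
      have hlt2 : v.val - m < n - m := by have := v.isLt; omega
      rcases g_zero (n - m) (v.val - m) hlt2 hv0 with ⟨h3, hlt, h2⟩ | ⟨h3, h2le, h2⟩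
      · refine ⟨⟨v.val + 1, by omega⟩, ?_, ?_⟩
        · rw [SimpleGraph.deleteEdges_adj]
          refine ⟨cycle_adj_succ hn _ _ ?_, edge_free hB v _ rfl (Or.inr hvm')⟩
          exact Nat.mod_eq_of_lt (by omega)
        · show F n m (v.val + 1) = 2
          rw [F, if_neg (by omega : ¬ v.val + 1 < m)]
          have : v.val + 1 - m = v.val - m + 1 := by omega
          rw [this]
          exact h2
      · refine ⟨⟨v.val - 1, by omega⟩, ?_, ?_⟩
        · rw [SimpleGraph.deleteEdges_adj]
          constructor
          · refine (cycle_adj_succ hn _ _ ?_).symm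
            simp only []
            rw [Nat.sub_add_cancel (by omega)]
            exact Nat.mod_eq_of_lt v.isLt
          · rw [Sym2.eq_swap]
            exact edge_free hB ⟨v.val - 1, by omega⟩ v (by simp; omega) (Or.inr (by simp; omega))
        · show F n m (v.val - 1) = 2
          rw [F, if_neg (by omega : ¬ v.val - 1 < m)]
          have : v.val - 1 - m = v.val - m - 1 := by omega
          rw [this]
          exact h2
  calc romanDom _ ≤ ∑ v, f v := romanDom_le hrdf
    _ = ∑ j ∈ Finset.range n, F n m j := Fin.sum_univ_eq_sum_range (F n m) n
    _ = (2*m+2)/3 + (2*(n-m)+2)/3 := F_weight n m (le_of_lt hm)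

lemma val_add_one {n : ℕ} [NeZero n] (hn : 3 ≤ n) (u : Fin n) :
    (u + 1).val = (u.val + 1) % n := by
  rw [Fin.add_def]
  show (u.val + (1 : Fin n).val) % n = _
  rw [Fin.val_one', Nat.mod_eq_of_lt (show 1 < n by omega)]

lemma romanDom_rotate {n : ℕ} (hn : 3 ≤ n) (B : Set (Sym2 (Fin n))) (k : Fin n) :
    romanDom ((cycleGraph n).deleteEdges B) =
    romanDom ((cycleGraph n).deleteEdges (Sym2.map (· + k) '' B)) := by
  haveI : NeZero n := ⟨by omega⟩
  apply romanDom_eq_of_equiv (Equiv.addRight k)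
  intro u v
  simp only [SimpleGraph.deleteEdges_adj, Equiv.coe_addRight]
  have h1 : (cycleGraph n).Adj u v ↔ (cycleGraph n).Adj (u + k) (v + k) := by
    rw [SimpleGraph.cycleGraph_adj', SimpleGraph.cycleGraph_adj']
    simp only [add_sub_add_right_eq_sub]
  have h2 := (Sym2.map.injective (f := (· + k)) (add_left_injective k)).mem_set_image
    (a := s(u, v)) (s := B)
  rw [Sym2.map_pair_eq] at h2
  rw [h1, ← h2]

lemma edge_form {n : ℕ} [NeZero n] (hn : 3 ≤ n) (e : Sym2 (Fin n))
    (he : e ∈ (cycleGraph n).edgeSet) : ∃ i : Fin n, e = s(i, i + 1) := by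
  induction e with | _ u v =>
  rw [SimpleGraph.mem_edgeSet] at he
  rcases cycle_adj_val hn he with h | h
  · refine ⟨u, ?_⟩
    rw [show v = u + 1 from Fin.ext (by rw [val_add_one hn]; exact h.symm)]
  · refine ⟨v, ?_⟩
    rw [show u = v + 1 from Fin.ext (by rw [val_add_one hn]; exact h.symm), Sym2.eq_swap]

lemma ncard_nbhd {n : ℕ} (hn : 3 ≤ n) (H : SimpleGraph (Fin n)) (hH : H ≤ cycleGraph n)
    (v : Fin n) : (H.neighborSet v).ncard ≤ 2 := by
  have hsub : H.neighborSet v ⊆ (cycleGraph n).neighborSet v := fun u hu => hH hu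
  have h1 : (H.neighborSet v).ncard ≤ ((cycleGraph n).neighborSet v).ncard :=
    Set.ncard_le_ncard hsub (Set.toFinite _)
  refine h1.trans ?_
  obtain ⟨k, rfl⟩ : ∃ k, n = k + 2 := ⟨n - 2, by omega⟩
  rw [SimpleGraph.cycleGraph_neighborSet]
  exact (Set.ncard_insert_le _ _).trans (by simp)

lemma c_cycle {n : ℕ} (hn : 3 ≤ n) : romanDom (cycleGraph n) = (2*n+2)/3 := by
  apply le_antisymm
  · have := upper_two n hn 0 (by omega) ∅ (by simp)
    rw [SimpleGraph.deleteEdges_empty] at this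
    simpa using this
  · obtain ⟨f, hf, hw⟩ := romanDom_exists (cycleGraph n)
    have hb := segment_bound (cycleGraph n) (ncard_nbhd hn _ le_rfl) hf Finset.univ
      (fun v _ u _ => Finset.mem_univ u)
    rw [Finset.card_univ, Fintype.card_fin] at hb
    have : ∑ v ∈ Finset.univ, f v = romanDom (cycleGraph n) := hw
    omega

lemma mk_eq_mk {n a b : ℕ} {ha : a < n} {hb : b < n} (h : (⟨a, ha⟩ : Fin n) = ⟨b, hb⟩) :
    a = b := congrArg Fin.val h

open Fin.CommRing in
lemma upper_del_two {n : ℕ} (hn : 3 ≤ n) (e e' : Sym2 (Fin n)) (hne : e ≠ e')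
    (he : e ∈ (cycleGraph n).edgeSet) (he' : e' ∈ (cycleGraph n).edgeSet) :
    ∃ m, 1 ≤ m ∧ m < n ∧
      romanDom ((cycleGraph n).deleteEdges {e, e'}) ≤ (2*m+2)/3 + (2*(n-m)+2)/3 := by
  haveI : NeZero n := ⟨by omega⟩
  obtain ⟨i, rfl⟩ := edge_form hn e he
  obtain ⟨i', rfl⟩ := edge_form hn e' he'
  have hn1 : n - 1 < n := by omega
  have hn0 : 0 < n := by omega
  set t : Fin n := ⟨n-1, hn1⟩ with ht
  set z : Fin n := ⟨0, hn0⟩ with hz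
  have htv : t.val = n - 1 := rfl
  have hzv : z.val = 0 := rfl
  set a : Fin n := i' + (t - i) with ha
  have hane : a ≠ t := by
    intro h
    apply hne
    have hii : i' = i := by
      have h2 := congrArg (· - (t - i)) h
      simp only [ha] at h2
      simpa using h2
    rw [hii]
  have h1 : i + (t - i) = t := by ring
  have h2 : i + 1 + (t - i) = z := by
    have e1 : i + 1 + (t - i) = t + 1 := by ring
    rw [e1]
    apply Fin.ext
    rw [val_add_one hn, htv, hzv, (by omega : n - 1 + 1 = n), Nat.mod_self]
  clear_value a t z
  have hav := a.isLt
  have hat : a.val < n - 1 := by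
    rcases Nat.lt_or_ge a.val (n-1) with h | h
    · exact h
    · exact absurd (Fin.ext (by omega : a.val = t.val)) hane
  set m : ℕ := a.val + 1 with hm
  clear_value m
  have hmlt : m < n := by omega
  have hm1 : m - 1 < n := by omega
  refine ⟨m, by omega, hmlt, ?_⟩
  have hrot := romanDom_rotate hn {s(i, i+1), s(i', i'+1)} (t - i)
  rw [Set.image_pair, Sym2.map_pair_eq, Sym2.map_pair_eq] at hrot
  have h3 : i' + (t - i) = (⟨m - 1, hm1⟩ : Fin n) := by
    rw [← ha]
    exact Fin.ext (by omega : a.val = m - 1)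
  have h4 : i' + 1 + (t - i) = (⟨m, hmlt⟩ : Fin n) := by
    have e1 : i' + 1 + (t - i) = a + 1 := by rw [ha]; ring
    rw [e1]
    apply Fin.ext
    rw [val_add_one hn]
    show (a.val + 1) % n = m
    rw [Nat.mod_eq_of_lt (by omega), hm]
  rw [h1, h2, h3, h4] at hrot
  rw [hrot]
  apply upper_two n hn m hmlt
  intro j hj hcond
  simp only [Set.mem_insert_iff, Set.mem_singleton_iff, Sym2.eq_iff]
  rintro ((⟨hx, hy⟩ | ⟨hx, hy⟩) | (⟨hx, hy⟩ | ⟨hx, hy⟩)) <;>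
    [(have h5 := congrArg Fin.val hx; have h6 := congrArg Fin.val hy);
     (have h5 := congrArg Fin.val hx; have h6 := congrArg Fin.val hy);
     (have h5 := mk_eq_mk hx; have h6 := mk_eq_mk hy);
     (have h5 := mk_eq_mk hx; have h6 := mk_eq_mk hy)] <;>
    (try simp only [htv, hzv] at h5 h6) <;> omega

open Fin.CommRing in
lemma upper_del_one {n : ℕ} (hn : 3 ≤ n) (e : Sym2 (Fin n)) (he : e ∈ (cycleGraph n).edgeSet) :
    romanDom ((cycleGraph n).deleteEdges {e}) ≤ (2*n+2)/3 := by
  haveI : NeZero n := ⟨by omega⟩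
  obtain ⟨i, rfl⟩ := edge_form hn e he
  have hn1 : n - 1 < n := by omega
  have hn0 : 0 < n := by omega
  set t : Fin n := ⟨n-1, hn1⟩ with ht
  set z : Fin n := ⟨0, hn0⟩ with hz
  have hrot := romanDom_rotate hn {s(i, i+1)} (t - i)
  rw [Set.image_singleton, Sym2.map_pair_eq] at hrot
  have h1 : i + (t - i) = t := by ring
  have h2 : i + 1 + (t - i) = z := by
    have e1 : i + 1 + (t - i) = t + 1 := by ring
    rw [e1]
    apply Fin.ext
    rw [val_add_one hn]
    show (n - 1 + 1) % n = 0
    rw [(by omega : n - 1 + 1 = n), Nat.mod_self]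
  rw [h1, h2] at hrot
  rw [hrot]
  have key := upper_two n hn 0 (by omega) {s(t, z)} ?_
  · simpa using key
  · intro j hj _
    simp only [Set.mem_singleton_iff, Sym2.eq_iff, ht, hz]
    rintro (⟨ha, hb⟩ | ⟨ha, hb⟩)
    · have := mk_eq_mk ha; have := mk_eq_mk hb; omega
    · have := mk_eq_mk ha; have := mk_eq_mk hb; omega

lemma strict_two {n : ℕ} (hn : 3 ≤ n) (h32 : n % 3 ≠ 2) :
    (2*n+2)/3 < romanDom ((cycleGraph n).deleteEdges
      {s((⟨n-1, by omega⟩ : Fin n), (⟨0, by omega⟩ : Fin n)),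
       s((⟨1, by omega⟩ : Fin n), (⟨2, by omega⟩ : Fin n))}) := by
  classical
  set B : Set (Sym2 (Fin n)) :=
      {s((⟨n-1, by omega⟩ : Fin n), (⟨0, by omega⟩ : Fin n)),
       s((⟨1, by omega⟩ : Fin n), (⟨2, by omega⟩ : Fin n))} with hB
  set H := (cycleGraph n).deleteEdges B with hH
  obtain ⟨f, hf, hw⟩ := romanDom_exists H
  have hdeg := ncard_nbhd hn H (SimpleGraph.deleteEdges_le B)
  set S1 : Finset (Fin n) := Finset.univ.filter (fun v => v.val < 2) with hS1
  set S2 : Finset (Fin n) := Finset.univ.filter (fun v => ¬ v.val < 2) with hS2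
  have hsplit : ∑ v ∈ S1, f v + ∑ v ∈ S2, f v = ∑ v, f v :=
    Finset.sum_filter_add_sum_filter_not _ _ f
  have hcards : S1.card + S2.card = n := by
    rw [hS1, hS2, Finset.card_filter_add_card_filter_not, Finset.card_univ,
      Fintype.card_fin]
  have hcard1 : S1.card = 2 := by
    have he : S1 = {(⟨0, by omega⟩ : Fin n), ⟨1, by omega⟩} := by
      ext v
      simp only [hS1, Finset.mem_filter, Finset.mem_univ, true_and, Finset.mem_insert,
        Finset.mem_singleton, Fin.ext_iff]
      show v.val < 2 ↔ v.val = 0 ∨ v.val = 1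
      omega
    rw [he, Finset.card_insert_of_notMem (by simp), Finset.card_singleton]
  have hcl1 : ∀ v ∈ S1, ∀ u, H.Adj v u → u ∈ S1 := by
    intro v hv u hadj
    rw [hS1, Finset.mem_filter] at hv ⊢
    refine ⟨Finset.mem_univ u, ?_⟩
    have hv2 : v.val < 2 := hv.2
    rw [hH, SimpleGraph.deleteEdges_adj] at hadj
    obtain ⟨hadj, hmem⟩ := hadj
    rw [hB] at hmem
    simp only [Set.mem_insert_iff, Set.mem_singleton_iff] at hmem
    push_neg at hmem
    by_contra hu
    rcases cycle_adj_val hn hadj with h | h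
    · rw [Nat.mod_eq_of_lt (by omega)] at h
      exact hmem.2 (Sym2.eq_iff.mpr (Or.inl
        ⟨Fin.ext (show v.val = 1 by omega), Fin.ext (show u.val = 2 by omega)⟩))
    · rcases Nat.lt_or_ge (u.val + 1) n with hlt | hge
      · rw [Nat.mod_eq_of_lt hlt] at h; omega
      · have hun : u.val + 1 = n := by have := u.isLt; omega
        rw [hun, Nat.mod_self] at h
        exact hmem.1 (Sym2.eq_iff.mpr (Or.inr
          ⟨Fin.ext (show v.val = 0 by omega), Fin.ext (show u.val = n - 1 by omega)⟩))
  have hcl2 : ∀ v ∈ S2, ∀ u, H.Adj v u → u ∈ S2 := by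
    intro v hv u hadj
    rw [hS2, Finset.mem_filter] at hv ⊢
    refine ⟨Finset.mem_univ u, ?_⟩
    have hv2 : ¬ v.val < 2 := hv.2
    rw [hH, SimpleGraph.deleteEdges_adj] at hadj
    obtain ⟨hadj, hmem⟩ := hadj
    rw [hB] at hmem
    simp only [Set.mem_insert_iff, Set.mem_singleton_iff] at hmem
    push_neg at hmem
    by_contra hu
    rcases cycle_adj_val hn hadj with h | h
    · rcases Nat.lt_or_ge (v.val + 1) n with hlt | hge
      · rw [Nat.mod_eq_of_lt hlt] at h; omega
      · have hvn : v.val + 1 = n := by have := v.isLt; omega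
        rw [hvn, Nat.mod_self] at h
        exact hmem.1 (Sym2.eq_iff.mpr (Or.inl
          ⟨Fin.ext (show v.val = n - 1 by omega), Fin.ext (show u.val = 0 by omega)⟩))
    · rw [Nat.mod_eq_of_lt (by omega)] at h
      exact hmem.2 (Sym2.eq_iff.mpr (Or.inr
        ⟨Fin.ext (show v.val = 2 by omega), Fin.ext (show u.val = 1 by omega)⟩))
  have b1 := segment_bound H hdeg hf S1 hcl1
  have b2 := segment_bound H hdeg hf S2 hcl2
  rw [hw] at hsplit
  omega

lemma strict_three {n : ℕ} (hn : 3 ≤ n) (h32 : n % 3 = 2) :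
    (2*n+2)/3 < romanDom ((cycleGraph n).deleteEdges
      {s((⟨n-1, by omega⟩ : Fin n), (⟨0, by omega⟩ : Fin n)),
       s((⟨1, by omega⟩ : Fin n), (⟨2, by omega⟩ : Fin n)),
       s((⟨3, by omega⟩ : Fin n), (⟨4, by omega⟩ : Fin n))}) := by
  classical
  have hn5 : 5 ≤ n := by omega
  set B : Set (Sym2 (Fin n)) :=
      {s((⟨n-1, by omega⟩ : Fin n), (⟨0, by omega⟩ : Fin n)),
       s((⟨1, by omega⟩ : Fin n), (⟨2, by omega⟩ : Fin n)),
       s((⟨3, by omega⟩ : Fin n), (⟨4, by omega⟩ : Fin n))} with hB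
  set H := (cycleGraph n).deleteEdges B with hH
  obtain ⟨f, hf, hw⟩ := romanDom_exists H
  have hdeg := ncard_nbhd hn H (SimpleGraph.deleteEdges_le B)
  set S1 : Finset (Fin n) := Finset.univ.filter (fun v => v.val < 2) with hS1
  set T : Finset (Fin n) := Finset.univ.filter (fun v => ¬ v.val < 2) with hT
  set S2 : Finset (Fin n) := T.filter (fun v => v.val < 4) with hS2
  set S3 : Finset (Fin n) := T.filter (fun v => ¬ v.val < 4) with hS3
  have hsplit1 : ∑ v ∈ S1, f v + ∑ v ∈ T, f v = ∑ v, f v :=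
    Finset.sum_filter_add_sum_filter_not _ _ f
  have hsplit2 : ∑ v ∈ S2, f v + ∑ v ∈ S3, f v = ∑ v ∈ T, f v :=
    Finset.sum_filter_add_sum_filter_not _ _ f
  have hcards1 : S1.card + T.card = n := by
    rw [hS1, hT, Finset.card_filter_add_card_filter_not, Finset.card_univ,
      Fintype.card_fin]
  have hcards2 : S2.card + S3.card = T.card := by
    rw [hS2, hS3, Finset.card_filter_add_card_filter_not]
  have hcard1 : S1.card = 2 := by
    have he : S1 = {(⟨0, by omega⟩ : Fin n), ⟨1, by omega⟩} := by
      ext v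
      simp only [hS1, Finset.mem_filter, Finset.mem_univ, true_and, Finset.mem_insert,
        Finset.mem_singleton, Fin.ext_iff]
      show v.val < 2 ↔ v.val = 0 ∨ v.val = 1
      omega
    rw [he, Finset.card_insert_of_notMem (by simp), Finset.card_singleton]
  have hcard2 : S2.card = 2 := by
    have he : S2 = {(⟨2, by omega⟩ : Fin n), ⟨3, by omega⟩} := by
      ext v
      simp only [hS2, hT, Finset.mem_filter, Finset.mem_univ, true_and, Finset.mem_insert,
        Finset.mem_singleton, Fin.ext_iff]
      show (¬ v.val < 2) ∧ v.val < 4 ↔ v.val = 2 ∨ v.val = 3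
      omega
    rw [he, Finset.card_insert_of_notMem (by simp), Finset.card_singleton]
  have hmemB : ∀ v u : Fin n, s(v, u) ∈ B ↔
      (s(v,u) = s((⟨n-1, by omega⟩ : Fin n), (⟨0, by omega⟩ : Fin n)) ∨
       s(v,u) = s((⟨1, by omega⟩ : Fin n), (⟨2, by omega⟩ : Fin n)) ∨
       s(v,u) = s((⟨3, by omega⟩ : Fin n), (⟨4, by omega⟩ : Fin n))) := by
    intro v u
    rw [hB]
    simp only [Set.mem_insert_iff, Set.mem_singleton_iff]
  have hcl1 : ∀ v ∈ S1, ∀ u, H.Adj v u → u ∈ S1 := by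
    intro v hv u hadj
    rw [hS1, Finset.mem_filter] at hv ⊢
    refine ⟨Finset.mem_univ u, ?_⟩
    have hv2 : v.val < 2 := hv.2
    rw [hH, SimpleGraph.deleteEdges_adj] at hadj
    obtain ⟨hadj, hmem⟩ := hadj
    rw [hmemB] at hmem
    push_neg at hmem
    by_contra hu
    rcases cycle_adj_val hn hadj with h | h
    · rw [Nat.mod_eq_of_lt (by omega)] at h
      exact hmem.2.1 (Sym2.eq_iff.mpr (Or.inl
        ⟨Fin.ext (show v.val = 1 by omega), Fin.ext (show u.val = 2 by omega)⟩))
    · rcases Nat.lt_or_ge (u.val + 1) n with hlt | hge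
      · rw [Nat.mod_eq_of_lt hlt] at h; omega
      · have hun : u.val + 1 = n := by have := u.isLt; omega
        rw [hun, Nat.mod_self] at h
        exact hmem.1 (Sym2.eq_iff.mpr (Or.inr
          ⟨Fin.ext (show v.val = 0 by omega), Fin.ext (show u.val = n - 1 by omega)⟩))
  have hcl2 : ∀ v ∈ S2, ∀ u, H.Adj v u → u ∈ S2 := by
    intro v hv u hadj
    rw [hS2, Finset.mem_filter, hT, Finset.mem_filter] at hv ⊢
    obtain ⟨⟨-, hv2⟩, hv4⟩ := hv
    rw [hH, SimpleGraph.deleteEdges_adj] at hadj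
    obtain ⟨hadj, hmem⟩ := hadj
    rw [hmemB] at hmem
    push_neg at hmem
    have goal2 : ¬ u.val < 2 ∧ u.val < 4 := by
      by_contra hu
      rcases cycle_adj_val hn hadj with h | h
      · rw [Nat.mod_eq_of_lt (by omega)] at h
        -- u.val = v.val + 1 ∈ {3, 4}; bad only if u.val = 4 (v=3) or u.val small impossible
        have : v.val = 3 ∧ u.val = 4 := by omega
        exact hmem.2.2 (Sym2.eq_iff.mpr (Or.inl
          ⟨Fin.ext (show v.val = 3 by omega), Fin.ext (show u.val = 4 by omega)⟩))
      · rcases Nat.lt_or_ge (u.val + 1) n with hlt | hge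
        · rw [Nat.mod_eq_of_lt hlt] at h
          have : u.val = 1 ∧ v.val = 2 := by omega
          exact hmem.2.1 (Sym2.eq_iff.mpr (Or.inr
            ⟨Fin.ext (show v.val = 2 by omega), Fin.ext (show u.val = 1 by omega)⟩))
        · have hun : u.val + 1 = n := by have := u.isLt; omega
          rw [hun, Nat.mod_self] at h
          omega
    exact ⟨⟨Finset.mem_univ u, goal2.1⟩, goal2.2⟩
  have hcl3 : ∀ v ∈ S3, ∀ u, H.Adj v u → u ∈ S3 := by
    intro v hv u hadj
    rw [hS3, Finset.mem_filter, hT, Finset.mem_filter] at hv ⊢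
    obtain ⟨⟨-, hv2⟩, hv4⟩ := hv
    rw [hH, SimpleGraph.deleteEdges_adj] at hadj
    obtain ⟨hadj, hmem⟩ := hadj
    rw [hmemB] at hmem
    push_neg at hmem
    have goal2 : ¬ u.val < 4 := by
      by_contra hu
      rcases cycle_adj_val hn hadj with h | h
      · rcases Nat.lt_or_ge (v.val + 1) n with hlt | hge
        · rw [Nat.mod_eq_of_lt hlt] at h; omega
        · have hvn : v.val + 1 = n := by have := v.isLt; omega
          rw [hvn, Nat.mod_self] at h
          exact hmem.1 (Sym2.eq_iff.mpr (Or.inl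
            ⟨Fin.ext (show v.val = n - 1 by omega), Fin.ext (show u.val = 0 by omega)⟩))
      · rw [Nat.mod_eq_of_lt (by omega)] at h
        exact hmem.2.2 (Sym2.eq_iff.mpr (Or.inr
          ⟨Fin.ext (show v.val = 4 by omega), Fin.ext (show u.val = 3 by omega)⟩))
    exact ⟨⟨Finset.mem_univ u, by omega⟩, goal2⟩
  have b1 := segment_bound H hdeg hf S1 hcl1
  have b2 := segment_bound H hdeg hf S2 hcl2
  have b3 := segment_bound H hdeg hf S3 hcl3
  rw [hw] at hsplit1
  omega

lemma del_le {n : ℕ} (hn : 3 ≤ n) (B : Set (Sym2 (Fin n))) (hBs : B ⊆ (cycleGraph n).edgeSet)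
    (hc : B.ncard ≤ 2) (h2 : B.ncard = 2 → n % 3 = 2) :
    romanDom ((cycleGraph n).deleteEdges B) ≤ (2*n+2)/3 := by
  have hfin : B.Finite := Set.toFinite B
  rcases (show B.ncard = 0 ∨ B.ncard = 1 ∨ B.ncard = 2 by omega) with h | h | h
  · rw [(Set.ncard_eq_zero hfin).mp h, SimpleGraph.deleteEdges_empty]
    exact le_of_eq (c_cycle hn)
  · obtain ⟨e, rfl⟩ := Set.ncard_eq_one.mp h
    exact upper_del_one hn e (hBs rfl)
  · obtain ⟨e, e', hne, rfl⟩ := Set.ncard_eq_two.mp h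
    obtain ⟨m, hm1, hm2, hle⟩ := upper_del_two hn e e' hne
      (hBs (Set.mem_insert e _)) (hBs (Set.mem_insert_of_mem e rfl))
    refine hle.trans ?_
    have h32 := h2 h
    omega

theorem stmt11 (n : ℕ) (hn : 3 ≤ n) :
    romanBondage (SimpleGraph.cycleGraph n) = if n % 3 = 2 then 3 else 2 := by
  have hcyc := c_cycle hn
  by_cases h32 : n % 3 = 2
  all_goals simp only [h32, if_true, if_false, romanBondage]
  · -- n % 3 = 2, answer 3
    have hn5 : 5 ≤ n := by omega
    set e1 : Sym2 (Fin n) := s((⟨n-1, by omega⟩ : Fin n), (⟨0, by omega⟩ : Fin n)) with he1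
    set e2 : Sym2 (Fin n) := s((⟨1, by omega⟩ : Fin n), (⟨2, by omega⟩ : Fin n)) with he2
    set e3 : Sym2 (Fin n) := s((⟨3, by omega⟩ : Fin n), (⟨4, by omega⟩ : Fin n)) with he3
    have hsub : ({e1, e2, e3} : Set (Sym2 (Fin n))) ⊆ (cycleGraph n).edgeSet := by
      intro e he
      rcases he with rfl | rfl | rfl
      · rw [SimpleGraph.mem_edgeSet]
        refine cycle_adj_succ hn _ _ ?_
        show (n - 1 + 1) % n = 0
        rw [(by omega : n - 1 + 1 = n), Nat.mod_self]
      · rw [SimpleGraph.mem_edgeSet]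
        refine cycle_adj_succ hn _ _ ?_
        show (1 + 1) % n = 2
        rw [Nat.mod_eq_of_lt (by omega)]
      · rw [SimpleGraph.mem_edgeSet]
        refine cycle_adj_succ hn _ _ ?_
        show (3 + 1) % n = 4
        rw [Nat.mod_eq_of_lt (by omega)]
    have hne12 : e1 ≠ e2 := by
      intro h
      rcases Sym2.eq_iff.mp h with ⟨ha, hb⟩ | ⟨ha, hb⟩ <;>
        [skip; skip] <;> (have := mk_eq_mk ha; have := mk_eq_mk hb; omega)
    have hne13 : e1 ≠ e3 := by
      intro h
      rcases Sym2.eq_iff.mp h with ⟨ha, hb⟩ | ⟨ha, hb⟩ <;>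
        [skip; skip] <;> (have := mk_eq_mk ha; have := mk_eq_mk hb; omega)
    have hne23 : e2 ≠ e3 := by
      intro h
      rcases Sym2.eq_iff.mp h with ⟨ha, hb⟩ | ⟨ha, hb⟩ <;>
        [skip; skip] <;> (have := mk_eq_mk ha; have := mk_eq_mk hb; omega)
    have hcard : ({e1, e2, e3} : Set (Sym2 (Fin n))).ncard = 3 := by
      rw [Set.ncard_insert_of_notMem (by simp [hne12, hne13]) (Set.toFinite _),
        Set.ncard_pair hne23]
    have hmem : 3 ∈ {k | ∃ B : Set (Sym2 (Fin n)), B ⊆ (cycleGraph n).edgeSet ∧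
        romanDom ((cycleGraph n).deleteEdges B) > romanDom (cycleGraph n) ∧ B.ncard = k} := by
      refine ⟨{e1, e2, e3}, hsub, ?_, hcard⟩
      rw [hcyc, he1, he2, he3]
      exact strict_three hn h32
    apply le_antisymm (Nat.sInf_le hmem)
    apply le_csInf ⟨3, hmem⟩
    rintro k ⟨B, hBs, hgt, hk⟩
    by_contra hlt
    push_neg at hlt
    have := del_le hn B hBs (by omega) (fun _ => h32)
    rw [hcyc] at hgt
    omega
  · -- n % 3 ≠ 2, answer 2
    set e1 : Sym2 (Fin n) := s((⟨n-1, by omega⟩ : Fin n), (⟨0, by omega⟩ : Fin n)) with he1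
    set e2 : Sym2 (Fin n) := s((⟨1, by omega⟩ : Fin n), (⟨2, by omega⟩ : Fin n)) with he2
    have hsub : ({e1, e2} : Set (Sym2 (Fin n))) ⊆ (cycleGraph n).edgeSet := by
      intro e he
      rcases he with rfl | rfl
      · rw [SimpleGraph.mem_edgeSet]
        refine cycle_adj_succ hn _ _ ?_
        show (n - 1 + 1) % n = 0
        rw [(by omega : n - 1 + 1 = n), Nat.mod_self]
      · rw [SimpleGraph.mem_edgeSet]
        refine cycle_adj_succ hn _ _ ?_
        show (1 + 1) % n = 2
        rw [Nat.mod_eq_of_lt (by omega)]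
    have hne12 : e1 ≠ e2 := by
      intro h
      rcases Sym2.eq_iff.mp h with ⟨ha, hb⟩ | ⟨ha, hb⟩ <;>
        [skip; skip] <;> (have := mk_eq_mk ha; have := mk_eq_mk hb; omega)
    have hmem : 2 ∈ {k | ∃ B : Set (Sym2 (Fin n)), B ⊆ (cycleGraph n).edgeSet ∧
        romanDom ((cycleGraph n).deleteEdges B) > romanDom (cycleGraph n) ∧ B.ncard = k} := by
      refine ⟨{e1, e2}, hsub, ?_, Set.ncard_pair hne12⟩
      rw [hcyc, he1, he2]
      exact strict_two hn h32
    apply le_antisymm (Nat.sInf_le hmem)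
    apply le_csInf ⟨2, hmem⟩
    rintro k ⟨B, hBs, hgt, hk⟩
    by_contra hlt
    push_neg at hlt
    have := del_le hn B hBs (by omega) (by omega)
    rw [hcyc] at hgt
    omega
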